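/- For any three unit vectors ψ₁, ψ₂, ψ₃ in ℂ² there exists a unit vector χ ∈ ℂ² such that |⟨χ, ψ_j⟩|² ≥ 1/2 for j = 1, 2, 3 (equivalently, the three Bloch vectors of ψ₁, ψ₂, ψ₃ lie in a common closed half sphere). -/

import Mathlib

open scoped BigOperators

/-- The standard Hermitian inner product on `ℂ^d`, conjugate-linear in the
first argument: `⟨φ, ψ⟩ = ∑ i, conj (φ i) * ψ i`. -/
noncomputable def inp {d : ℕ} (φ ψ : Fin d → ℂ) : ℂ :=
  ∑ i, (starRingEnd ℂ) (φ i) * ψ i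

/-- auxiliary candidate vector -/
noncomputable def chiv (a b ω ε : ℂ) : Fin 2 → ℂ :=
  ![(a - ε * ω * (starRingEnd ℂ) b) / (Real.sqrt 2 : ℂ),
    (b + ε * ω * (starRingEnd ℂ) a) / (Real.sqrt 2 : ℂ)]

lemma inp_chiv (a b ω ε : ℂ) (hε : (starRingEnd ℂ) ε = ε) (v : Fin 2 → ℂ) :
    inp (chiv a b ω ε) v =
      (((starRingEnd ℂ) a - ε * (starRingEnd ℂ) ω * b) * v 0 +
       ((starRingEnd ℂ) b + ε * (starRingEnd ℂ) ω * a) * v 1) / (Real.sqrt 2 : ℂ) := by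
  simp [inp, chiv, Fin.sum_univ_two, map_div₀, map_sub, map_add, map_mul,
    Complex.conj_ofReal, hε]
  ring

lemma absq_div (N : ℂ) :
    ‖N / (Real.sqrt 2 : ℂ)‖ ^ 2 = Complex.normSq N / 2 := by
  have hs : Complex.normSq ((Real.sqrt 2 : ℝ) : ℂ) = 2 := by
    rw [Complex.normSq_ofReal, Real.mul_self_sqrt] ; norm_num
  rw [Complex.sq_norm, map_div₀ Complex.normSq, hs]

lemma normSq_of_conj_mul (N : ℂ) (c : ℝ) (h : (starRingEnd ℂ) N * N = (c : ℂ)) :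
    Complex.normSq N = c := by
  have h2 := Complex.normSq_eq_conj_mul_self (z := N)
  rw [h] at h2
  exact_mod_cast h2

lemma exists_phase (t s : ℂ) :
    ∃ ω : ℂ, (starRingEnd ℂ) ω * ω = 1 ∧
      (starRingEnd ℂ) ω * ((starRingEnd ℂ) t * s) + ω * (t * (starRingEnd ℂ) s) = 0 := by
  set u : ℂ := (starRingEnd ℂ) t * s with hu
  have hcu : (starRingEnd ℂ) u = t * (starRingEnd ℂ) s := by
    rw [hu]; simp [map_mul]
  by_cases h : u = 0
  · refine ⟨1, by simp, ?_⟩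
    rw [← hcu, h]; simp
  · have habs : ((‖u‖ : ℝ) : ℂ) ≠ 0 := by simpa using h
    have hu2 : (starRingEnd ℂ) u * u = ((‖u‖ : ℝ) : ℂ) * ((‖u‖ : ℝ) : ℂ) := by
      have := Complex.normSq_eq_conj_mul_self (z := u)
      rw [← this, Complex.normSq_eq_norm_sq]
      push_cast; ring
    refine ⟨Complex.I * u / ((‖u‖ : ℝ) : ℂ), ?_, ?_⟩
    · have e : (starRingEnd ℂ) (Complex.I * u / ((‖u‖ : ℝ) : ℂ)) =
          -Complex.I * (starRingEnd ℂ) u / ((‖u‖ : ℝ) : ℂ) := by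
        simp only [map_div₀, map_mul, Complex.conj_I, Complex.conj_ofReal]
      rw [e, div_mul_div_comm]
      rw [show -Complex.I * (starRingEnd ℂ) u * (Complex.I * u)
            = -(Complex.I * Complex.I) * ((starRingEnd ℂ) u * u) from by ring,
        Complex.I_mul_I, neg_neg, one_mul]
      rw [hu2, div_self (mul_ne_zero habs habs)]
    · rw [← hcu]
      have e : (starRingEnd ℂ) (Complex.I * u / ((‖u‖ : ℝ) : ℂ)) =
          -Complex.I * (starRingEnd ℂ) u / ((‖u‖ : ℝ) : ℂ) := by
        simp only [map_div₀, map_mul, Complex.conj_I, Complex.conj_ofReal]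
      rw [e, div_mul_eq_mul_div, div_mul_eq_mul_div, ← add_div]
      rw [show -Complex.I * (starRingEnd ℂ) u * u + Complex.I * u * (starRingEnd ℂ) u = 0
        from by ring, zero_div]

lemma keyid (a b x y ca cb cx cy ω cω ε : ℂ)
    (h0 : ca*a + cb*b = 1) (h1 : cx*x + cy*y = 1) (hω : cω*ω = 1) (hε : ε*ε = 1)
    (hcross : cω*((a*cx + b*cy)*(-b*x + a*y)) + ω*((ca*x + cb*y)*(-cb*cx + ca*cy)) = 0) :
    ((a - ε*ω*cb)*cx + (b + ε*ω*ca)*cy) * ((ca - ε*cω*b)*x + (cb + ε*cω*a)*y) = 1 := by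
  linear_combination (cx*x + cy*y) * h0 + h1 + ((-cb*cx + ca*cy)*(-b*x + a*y)*ω*cω) * hε +
    ((-cb*cx + ca*cy)*(-b*x + a*y)) * hω + ε * hcross

lemma keyid2 (a b p q ca cb cp cq ω cω : ℂ)
    (h0 : ca*a + cb*b = 1) (h2 : cp*p + cq*q = 1) (hω : cω*ω = 1) :
    ((a - ω*cb)*cp + (b + ω*ca)*cq) * ((ca - cω*b)*p + (cb + cω*a)*q)
    + ((a + ω*cb)*cp + (b - ω*ca)*cq) * ((ca + cω*b)*p + (cb - cω*a)*q) = 2 := by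
  linear_combination (2*(cp*p + cq*q))*h0 + 2*h2 + (2*((-cb*cp+ca*cq)*(-b*p+a*q)))*hω

-- |⟨χ, v⟩|² = 1/2 where χ is built from v itself
lemma abs0 (ω ε : ℂ) (v : Fin 2 → ℂ)
    (h0 : (starRingEnd ℂ) (v 0) * v 0 + (starRingEnd ℂ) (v 1) * v 1 = 1)
    (hcε : (starRingEnd ℂ) ε = ε) :
    ‖inp (chiv (v 0) (v 1) ω ε) v‖ ^ 2 = 1/2 := by
  rw [inp_chiv _ _ _ _ hcε v, absq_div,
    normSq_of_conj_mul _ 1 (by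
      rw [show ((starRingEnd ℂ) (v 0) - ε * (starRingEnd ℂ) ω * v 1) * v 0 +
          ((starRingEnd ℂ) (v 1) + ε * (starRingEnd ℂ) ω * v 0) * v 1 = 1 from by
        linear_combination h0]
      simp)]

-- |⟨χ, w⟩|² = 1/2 for the second vector, thanks to the choice of phase ω
lemma abs1 (ω ε : ℂ) (v w : Fin 2 → ℂ)
    (h0 : (starRingEnd ℂ) (v 0) * v 0 + (starRingEnd ℂ) (v 1) * v 1 = 1)
    (h1 : (starRingEnd ℂ) (w 0) * w 0 + (starRingEnd ℂ) (w 1) * w 1 = 1)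
    (hω1 : (starRingEnd ℂ) ω * ω = 1)
    (hcross : (starRingEnd ℂ) ω * ((v 0 * (starRingEnd ℂ) (w 0) + v 1 * (starRingEnd ℂ) (w 1)) *
        (-(v 1) * w 0 + v 0 * w 1)) +
      ω * (((starRingEnd ℂ) (v 0) * w 0 + (starRingEnd ℂ) (v 1) * w 1) *
        (-((starRingEnd ℂ) (v 1)) * (starRingEnd ℂ) (w 0) + (starRingEnd ℂ) (v 0) * (starRingEnd ℂ) (w 1))) = 0)
    (hcε : (starRingEnd ℂ) ε = ε) (hε2 : ε*ε = 1) :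
    ‖inp (chiv (v 0) (v 1) ω ε) w‖ ^ 2 = 1/2 := by
  rw [inp_chiv _ _ _ _ hcε w, absq_div, normSq_of_conj_mul _ 1 ?_]
  have hcN : (starRingEnd ℂ) (((starRingEnd ℂ) (v 0) - ε * (starRingEnd ℂ) ω * v 1) * w 0 +
      ((starRingEnd ℂ) (v 1) + ε * (starRingEnd ℂ) ω * v 0) * w 1) =
      (v 0 - ε * ω * (starRingEnd ℂ) (v 1)) * (starRingEnd ℂ) (w 0) +
      (v 1 + ε * ω * (starRingEnd ℂ) (v 0)) * (starRingEnd ℂ) (w 1) := by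
    simp only [map_add, map_sub, map_mul, Complex.conj_conj, hcε]
  rw [hcN, Complex.ofReal_one]
  exact keyid (v 0) (v 1) (w 0) (w 1) ((starRingEnd ℂ) (v 0)) ((starRingEnd ℂ) (v 1))
    ((starRingEnd ℂ) (w 0)) ((starRingEnd ℂ) (w 1)) ω ((starRingEnd ℂ) ω) ε h0 h1 hω1 hε2 hcross

-- the two sign choices for the third vector sum to 1
lemma abs2 (ω : ℂ) (v w : Fin 2 → ℂ)
    (h0 : (starRingEnd ℂ) (v 0) * v 0 + (starRingEnd ℂ) (v 1) * v 1 = 1)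
    (h2 : (starRingEnd ℂ) (w 0) * w 0 + (starRingEnd ℂ) (w 1) * w 1 = 1)
    (hω1 : (starRingEnd ℂ) ω * ω = 1) :
    ‖inp (chiv (v 0) (v 1) ω 1) w‖ ^ 2 +
      ‖inp (chiv (v 0) (v 1) ω (-1)) w‖ ^ 2 = 1 := by
  rw [inp_chiv _ _ _ _ (by simp) w, inp_chiv _ _ _ _ (by simp) w, absq_div, absq_div]
  set Np : ℂ := ((starRingEnd ℂ) (v 0) - 1 * (starRingEnd ℂ) ω * v 1) * w 0 +
      ((starRingEnd ℂ) (v 1) + 1 * (starRingEnd ℂ) ω * v 0) * w 1 with hNp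
  set Nm : ℂ := ((starRingEnd ℂ) (v 0) - -1 * (starRingEnd ℂ) ω * v 1) * w 0 +
      ((starRingEnd ℂ) (v 1) + -1 * (starRingEnd ℂ) ω * v 0) * w 1 with hNm
  have hsum : (starRingEnd ℂ) Np * Np + (starRingEnd ℂ) Nm * Nm = 2 := by
    have hcNp : (starRingEnd ℂ) Np =
        (v 0 - ω * (starRingEnd ℂ) (v 1)) * (starRingEnd ℂ) (w 0) +
        (v 1 + ω * (starRingEnd ℂ) (v 0)) * (starRingEnd ℂ) (w 1) := by
      rw [hNp]; simp only [map_add, map_sub, map_mul, Complex.conj_conj, map_one, map_neg]; ring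
    have hcNm : (starRingEnd ℂ) Nm =
        (v 0 + ω * (starRingEnd ℂ) (v 1)) * (starRingEnd ℂ) (w 0) +
        (v 1 - ω * (starRingEnd ℂ) (v 0)) * (starRingEnd ℂ) (w 1) := by
      rw [hNm]; simp only [map_add, map_sub, map_mul, Complex.conj_conj, map_one, map_neg]; ring
    have hk := keyid2 (v 0) (v 1) (w 0) (w 1) ((starRingEnd ℂ) (v 0)) ((starRingEnd ℂ) (v 1))
      ((starRingEnd ℂ) (w 0)) ((starRingEnd ℂ) (w 1)) ω ((starRingEnd ℂ) ω) h0 h2 hω1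
    rw [hcNp, hcNm, hNp, hNm]
    linear_combination hk
  have hR : Complex.normSq Np + Complex.normSq Nm = 2 := by
    have e1 := Complex.normSq_eq_conj_mul_self (z := Np)
    have e2 := Complex.normSq_eq_conj_mul_self (z := Nm)
    have : ((Complex.normSq Np + Complex.normSq Nm : ℝ) : ℂ) = ((2 : ℝ) : ℂ) := by
      push_cast
      rw [e1, e2, hsum]
    exact_mod_cast this
  rw [← add_div, hR]
  norm_num

theorem stmt5 (ψ : Fin 3 → (Fin 2 → ℂ)) (hψ : ∀ j, inp (ψ j) (ψ j) = 1) :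
    ∃ χ : Fin 2 → ℂ, inp χ χ = 1 ∧
      ∀ j, (1 : ℝ) / 2 ≤ ‖inp χ (ψ j)‖ ^ 2 := by
  have h0 := hψ 0; have h1 := hψ 1; have h2 := hψ 2
  simp only [inp, Fin.sum_univ_two] at h0 h1 h2
  obtain ⟨ω, hω1, hωc⟩ := exists_phase
    ((starRingEnd ℂ) (ψ 0 0) * ψ 1 0 + (starRingEnd ℂ) (ψ 0 1) * ψ 1 1)
    (-(ψ 0 1) * ψ 1 0 + ψ 0 0 * ψ 1 1)
  have hcross : (starRingEnd ℂ) ω * ((ψ 0 0 * (starRingEnd ℂ) (ψ 1 0) + ψ 0 1 * (starRingEnd ℂ) (ψ 1 1)) *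
        (-(ψ 0 1) * ψ 1 0 + ψ 0 0 * ψ 1 1)) +
      ω * (((starRingEnd ℂ) (ψ 0 0) * ψ 1 0 + (starRingEnd ℂ) (ψ 0 1) * ψ 1 1) *
        (-((starRingEnd ℂ) (ψ 0 1)) * (starRingEnd ℂ) (ψ 1 0) +
          (starRingEnd ℂ) (ψ 0 0) * (starRingEnd ℂ) (ψ 1 1))) = 0 := by
    have h := hωc
    simp only [map_add, map_mul, map_neg, Complex.conj_conj] at h
    linear_combination h
  have hs2 : ((Real.sqrt 2 : ℝ) : ℂ) * ((Real.sqrt 2 : ℝ) : ℂ) = 2 := by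
    norm_cast
    rw [Real.mul_self_sqrt] ; norm_num
  have hne : ((Real.sqrt 2 : ℝ) : ℂ) ≠ 0 := by
    simp [Real.sqrt_eq_zero']
  have hunit : ∀ ε : ℂ, (starRingEnd ℂ) ε = ε → ε * ε = 1 →
      inp (chiv (ψ 0 0) (ψ 0 1) ω ε) (chiv (ψ 0 0) (ψ 0 1) ω ε) = 1 := by
    intro ε hcε hε2
    rw [inp_chiv _ _ _ _ hcε]
    simp only [chiv, Matrix.cons_val_zero, Matrix.cons_val_one, Matrix.head_cons]
    field_simp
    linear_combination (1 + ε*ε*ω*((starRingEnd ℂ) ω)) * h0 + (ω*((starRingEnd ℂ) ω)) * hε2 +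
      hω1 - hs2
  have k0p := abs0 ω 1 (ψ 0) h0 (by simp)
  have k0m := abs0 ω (-1) (ψ 0) h0 (by simp)
  have k1p := abs1 ω 1 (ψ 0) (ψ 1) h0 h1 hω1 hcross (by simp) (by norm_num)
  have k1m := abs1 ω (-1) (ψ 0) (ψ 1) h0 h1 hω1 hcross (by simp) (by norm_num)
  have k2 := abs2 ω (ψ 0) (ψ 2) h0 h2 hω1
  by_cases hc : (1:ℝ)/2 ≤ ‖inp (chiv (ψ 0 0) (ψ 0 1) ω 1) (ψ 2)‖ ^ 2
  · refine ⟨chiv (ψ 0 0) (ψ 0 1) ω 1, hunit 1 (by simp) (by norm_num), ?_⟩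
    intro j; fin_cases j
    · exact k0p.ge
    · exact k1p.ge
    · exact hc
  · refine ⟨chiv (ψ 0 0) (ψ 0 1) ω (-1), hunit (-1) (by simp) (by norm_num), ?_⟩
    intro j; fin_cases j
    · exact k0m.ge
    · exact k1m.ge
    · show (1:ℝ)/2 ≤ ‖inp (chiv (ψ 0 0) (ψ 0 1) ω (-1)) (ψ 2)‖ ^ 2
      push_neg at hc
      linarith [k2]
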